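/- If Z_h[ℓ,m] is a monochrome block at the end of iteration h, then for every g > h the content of positions ℓ through m is unchanged: Z_g[ℓ,m] = Z_h[ℓ,m]. -/

import Mathlib

open List Finset

variable {A : Type*}

/-- Length of the longest common prefix of two lists. -/
def lcpLen [DecidableEq A] : List A → List A → ℕ
  | a :: as, b :: bs => if a = b then lcpLen as bs + 1 else 0
  | _, _ => 0

/-- `sa` is the suffix array of `t`: a bijection of `[0, |t|)` listing the
suffixes of `t` in increasing lexicographic order. -/
def isSuffixArray [LinearOrder A] (t : List A) (sa : ℕ → ℕ) : Prop :=
  Set.BijOn sa (Set.Iio t.length) (Set.Iio t.length) ∧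
    ∀ i j, i < j → j < t.length → t.drop (sa i) < t.drop (sa j)

/-- The BWT of `t` w.r.t. the suffix array `sa` (0-based):
`bwt[i] = t[n-1]` if `sa[i] = 0` and `bwt[i] = t[sa[i]-1]` otherwise. -/
def bwtOf [Inhabited A] (t : List A) (sa : ℕ → ℕ) (i : ℕ) : A :=
  if sa i = 0 then t.getD (t.length - 1) default else t.getD (sa i - 1) default

/-- The BWT of `t` as a list. -/
def bwtList [LinearOrder A] [Inhabited A] (t : List A) (sa : ℕ → ℕ) : List A :=
  List.ofFn (fun i : Fin t.length => bwtOf t sa i)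

/-- `t0` and `t1` end with distinct sentinels `$0 < $1` that are smaller than
all other symbols and occur nowhere else in `t0 ++ t1`. -/
def Sentinels [LinearOrder A] [Inhabited A] (t0 t1 : List A) : Prop :=
  t0 ≠ [] ∧ t1 ≠ [] ∧ t0.getLast! < t1.getLast! ∧
  (∀ c ∈ t0 ++ t1, c ≠ t0.getLast! → t0.getLast! < c) ∧
  (∀ c ∈ t0 ++ t1, c ≠ t0.getLast! → c ≠ t1.getLast! → t1.getLast! < c) ∧
  (t0 ++ t1).count t0.getLast! = 1 ∧ (t0 ++ t1).count t1.getLast! = 1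

/-- The multi-string BWT of `t0, t1` w.r.t. a suffix array `sa` of `t0 ++ t1`
(0-based): `bwt01[i] = $0` if `sa[i] = 0`, `bwt01[i] = $1` if `sa[i] = n0`,
and `bwt01[i] = (t0 t1)[sa[i]-1]` otherwise. -/
def mbwt [Inhabited A] (t0 t1 : List A) (sa : ℕ → ℕ) (i : ℕ) : A :=
  if sa i = 0 then t0.getLast!
  else if sa i = t0.length then t1.getLast!
  else (t0 ++ t1).getD (sa i - 1) default

/-- Position (index in `Z`) of the `i`-th (0-based) occurrence of bit `b`. -/
def nthBitPos (Z : List Bool) (b : Bool) (i : ℕ) : ℕ :=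
  ((List.range Z.length).filter (fun k => Z.getD k (!b) == b)).getD i Z.length

/-- The length-`h` prefix of the context (suffix of `t0` or `t1`) associated to
position `p` of the bit vector `Z`: position `p` holds the `r`-th `0`
(resp. `r`-th `1`) where `r` is the number of `0`s (resp. `1`s) before `p`. -/
def keyAt [LinearOrder A] (t0 t1 : List A) (sa0 sa1 : ℕ → ℕ) (h : ℕ)
    (Z : List Bool) (p : ℕ) : List A :=
  if Z.getD p false then (t1.drop (sa1 ((Z.take p).count true))).take h
  else (t0.drop (sa0 ((Z.take p).count false))).take h

/-- The LCP array of `t` w.r.t. `sa` (0-based), with `-1` at the two ends. -/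
def lcpArr [DecidableEq A] (t : List A) (sa : ℕ → ℕ) (i : ℕ) : ℤ :=
  if i = 0 ∨ t.length ≤ i then -1
  else (lcpLen (t.drop (sa (i - 1))) (t.drop (sa i)) : ℤ)

/-- One pass of the H&M algorithm: every bit `b` of `Z` is tagged with the next
symbol `c` of `bwt_b`, and the tagged bits are stably sorted by symbol. -/
def hmStep [LinearOrder A] [Inhabited A] (bwt0 bwt1 : List A) (Z : List Bool) :
    List Bool :=
  let pairs := (List.range Z.length).map (fun k =>
    let b := Z.getD k false
    let c := if b then bwt1.getD ((Z.take k).count true) default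
             else bwt0.getD ((Z.take k).count false) default
    (b, c))
  (pairs.mergeSort (fun p q => decide (p.2 ≤ q.2))).map Prod.fst

/-- The bit vector `Z_h` of the H&M algorithm: `Z_0 = 0^{n0} 1^{n1}` and
`Z_h = hmStep Z_{h-1}`. -/
def hmZ [LinearOrder A] [Inhabited A] (bwt0 bwt1 : List A) (n0 n1 : ℕ) :
    ℕ → List Bool
  | 0 => List.replicate n0 false ++ List.replicate n1 true
  | h + 1 => hmStep bwt0 bwt1 (hmZ bwt0 bwt1 n0 n1 h)

/-- Id of the block of `Z` containing position `k`: the largest `j ≤ k` with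
`B[j] ≠ 0`. -/
def blockIdAt (B : List ℕ) (k : ℕ) : ℕ :=
  ((List.range (k + 1)).filter (fun j => !(B.getD j 0 == 0))).foldr max 0

/-- One pass of the modified H&M algorithm also maintaining the marker array
`B`: bits tagged with their symbol and the id of their block are stably sorted
by symbol; a zero entry `B[j]` receives the value `h` iff a new block of `Z_h`
(a change of the pair (symbol, source-block id)) starts at `j`. -/
def gstep [LinearOrder A] [Inhabited A] (bwt0 bwt1 : List A) (h : ℕ)
    (ZB : List Bool × List ℕ) : List Bool × List ℕ :=
  let Z := ZB.1
  let B := ZB.2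
  let pairs := (List.range Z.length).map (fun k =>
    let b := Z.getD k false
    let c := if b then bwt1.getD ((Z.take k).count true) default
             else bwt0.getD ((Z.take k).count false) default
    (b, c, blockIdAt B k))
  let sorted := pairs.mergeSort (fun p q => decide (p.2.1 ≤ q.2.1))
  let Z' := sorted.map (·.1)
  let B' := (List.range B.length).map (fun j =>
    if B.getD j 0 ≠ 0 then B.getD j 0
    else if j < sorted.length ∧
        (j = 0 ∨ (sorted.getD (j - 1) default).2 ≠ (sorted.getD j default).2)
      then h else 0)
  (Z', B')

/-- State `(Z_h, B)` of the modified H&M / Gap algorithm after iteration `h`: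
`Z_0 = 0^{n0} 1^{n1}`, `B` initialized to `1 0^{n0+n1-1} 1`. -/
def gapState [LinearOrder A] [Inhabited A] (bwt0 bwt1 : List A) (n0 n1 : ℕ) :
    ℕ → List Bool × List ℕ
  | 0 => (List.replicate n0 false ++ List.replicate n1 true,
          1 :: (List.replicate (n0 + n1 - 1) 0 ++ [1]))
  | h + 1 => gstep bwt0 bwt1 (h + 1) (gapState bwt0 bwt1 n0 n1 h)

/-- `[ℓ,m]` is a logical `h`-block: a maximal run of suffix-array positions
whose suffixes share the same length-`h` prefix. -/
def isBlock [LinearOrder A] (t : List A) (sa : ℕ → ℕ) (h : ℕ) (ℓ m : ℕ) : Prop :=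
  ℓ ≤ m ∧ m < t.length ∧ lcpArr t sa ℓ < h ∧ lcpArr t sa (m + 1) < h ∧
    ∀ i, ℓ < i → i ≤ m → (h : ℤ) ≤ lcpArr t sa i


set_option linter.unusedSectionVars false
set_option linter.unusedVariables false
section HMAux


variable {A : Type*}

section Defs
variable (t0 t1 : List A)

def gbit (n0 q : ℕ) : Bool := decide (n0 ≤ q)

def gpred (n0 n1 q : ℕ) : ℕ :=
  if q = 0 then n0 - 1 else if q = n0 then n0 + n1 - 1 else q - 1

def own (q : ℕ) : List A :=
  if q < t0.length then t0.drop q else t1.drop (q - t0.length)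

def gkey (h q : ℕ) : List A := ((t0 ++ t1).drop q).take h

def K (h q : ℕ) : List A ×ₗ (Bool ×ₗ List A) :=
  toLex (gkey t0 t1 h q, toLex (gbit t0.length q, own t0 t1 q))

def S [LinearOrder A] (h : ℕ) : List ℕ :=
  (List.range (t0.length + t1.length)).mergeSort
    (fun q q' => decide (K t0 t1 h q ≤ K t0 t1 h q'))

end Defs

section Basic
variable [LinearOrder A] (t0 t1 : List A)

theorem gpred_lt {q : ℕ} (h0 : 0 < t0.length) (h1 : 0 < t1.length)
    (hq : q < t0.length + t1.length) :
    gpred t0.length t1.length q < t0.length + t1.length := by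
  unfold gpred; split <;> [omega; skip]; split <;> omega

theorem gbit_gpred {q : ℕ} (h0 : 0 < t0.length) (h1 : 0 < t1.length)
    (hq : q < t0.length + t1.length) :
    gbit t0.length (gpred t0.length t1.length q) = gbit t0.length q := by
  unfold gpred gbit
  split
  · subst q; simp only [gbit, decide_eq_decide]; omega
  · split <;> [simp; skip] <;> [omega; skip]
    rename_i h h'
    simp only [decide_eq_decide]
    omega

theorem own_length {q : ℕ} (hq : q < t0.length + t1.length) :
    (own t0 t1 q).length =
      if q < t0.length then t0.length - q else t1.length - (q - t0.length) := by
  unfold own; split <;> simp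

theorem own_ne_nil {q : ℕ} (hq : q < t0.length + t1.length) : own t0 t1 q ≠ [] := by
  have := own_length t0 t1 hq
  intro h
  rw [h] at this
  simp at this
  split at this <;> omega

theorem own_inj {q q' : ℕ} (hq : q < t0.length + t1.length)
    (hq' : q' < t0.length + t1.length) (hb : gbit t0.length q = gbit t0.length q')
    (he : own t0 t1 q = own t0 t1 q') : q = q' := by
  have h1 := own_length t0 t1 hq
  have h2 := own_length t0 t1 hq'
  rw [he] at h1
  unfold gbit at hb
  simp only [decide_eq_decide] at hb
  rw [h2] at h1
  split at h1 <;> split at h1 <;> omega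

theorem K_inj {h q q' : ℕ} (hq : q < t0.length + t1.length)
    (hq' : q' < t0.length + t1.length) (he : K t0 t1 h q = K t0 t1 h q') : q = q' := by
  unfold K at he
  have h2 := congrArg (fun x => (ofLex x).2) he
  simp only [ofLex_toLex] at h2
  have hb := congrArg (fun x => (ofLex x).1) h2
  have ho := congrArg (fun x => (ofLex x).2) h2
  simp only [ofLex_toLex] at hb ho
  exact own_inj t0 t1 hq hq' hb ho

theorem S_perm (h : ℕ) : S t0 t1 h ~ List.range (t0.length + t1.length) :=
  List.mergeSort_perm _ _

theorem S_length (h : ℕ) : (S t0 t1 h).length = t0.length + t1.length := by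
  simpa using (S_perm t0 t1 h).length_eq

theorem S_nodup (h : ℕ) : (S t0 t1 h).Nodup :=
  (S_perm t0 t1 h).nodup_iff.mpr List.nodup_range

theorem S_mem {h q : ℕ} : q ∈ S t0 t1 h ↔ q < t0.length + t1.length := by
  rw [(S_perm t0 t1 h).mem_iff, List.mem_range]

theorem S_pairwise (h : ℕ) :
    (S t0 t1 h).Pairwise (fun q q' => K t0 t1 h q < K t0 t1 h q') := by
  have hs : (S t0 t1 h).Pairwise (fun q q' => K t0 t1 h q ≤ K t0 t1 h q') := by
    have := List.pairwise_mergeSort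
      (le := fun q q' => decide (K t0 t1 h q ≤ K t0 t1 h q'))
      (fun a b c hab hbc => by
        simp only [decide_eq_true_eq] at *; exact le_trans hab hbc)
      (fun a b => by simpa using le_total _ _)
      (List.range (t0.length + t1.length))
    refine this.imp ?_
    simp only [decide_eq_true_eq]
    exact fun h => h
  have hnd : (S t0 t1 h).Pairwise (· ≠ ·) := S_nodup t0 t1 h
  refine (hs.and hnd).imp_of_mem ?_
  intro a b ha hb hab
  exact lt_of_le_of_ne hab.1 fun he =>
    hab.2 (K_inj t0 t1 ((S_mem t0 t1).mp ha) ((S_mem t0 t1).mp hb) he)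

end Basic


section Gen
variable {α : Type*} [LinearOrder α]

theorem myLex.lt_of_lex {x y : List α} (h : List.Lex (· < ·) x y) : x < y := h

theorem myLex.lex_of_lt {x y : List α} (h : x < y) : List.Lex (· < ·) x y := h

theorem myLex.cons_lt_cons_of_lt {a b : α} (h : a < b) (l l' : List α) :
    (a :: l) < (b :: l') := List.Lex.rel h

theorem myLex.cons_lt_cons {a : α} {l l' : List α} (h : l < l') :
    (a :: l) < (a :: l') := List.Lex.cons h

private theorem myLex.take_aux {x y : List α} (hxy : List.Lex (· < ·) x y) :
    ∀ h : ℕ, x.take h < y.take h ∨ x.take h = y.take h := by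
  induction hxy with
  | nil =>
    intro h
    cases h with
    | zero => right; rfl
    | succ h => left; exact List.Lex.nil
  | @rel a l b l' hab =>
    intro h
    cases h with
    | zero => right; rfl
    | succ h => left; exact List.Lex.rel hab
  | @cons a l l' _ ih =>
    intro h
    cases h with
    | zero => right; rfl
    | succ h =>
      rcases ih h with h' | h'
      · left; exact List.Lex.cons h'
      · right; simpa using h'

theorem myLex.take_le_take {x y : List α} (hxy : x ≤ y) (h : ℕ) :
    x.take h ≤ y.take h := by
  rcases lt_or_eq_of_le hxy with hlt | rfl
  · rcases myLex.take_aux (myLex.lex_of_lt hlt) h with h' | h'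
    · exact le_of_lt h'
    · exact le_of_eq h'
  · exact le_rfl

private theorem myLex.append_aux {x y : List α} (hxy : List.Lex (· < ·) x y) :
    ¬ x <+: y → ∀ u v : List α, x ++ u < y ++ v := by
  induction hxy with
  | nil => exact fun hpre => absurd List.nil_prefix hpre
  | @rel a l b l' hab => exact fun _ u v => List.Lex.rel hab
  | @cons a l l' hlex ih =>
    intro hpre u v
    have : ¬ l <+: l' := fun hc => hpre (List.cons_prefix_cons.mpr ⟨rfl, hc⟩)
    exact List.Lex.cons (ih this u v)

theorem myLex.append_lt_append {x y : List α} (hxy : x < y) (hpre : ¬ x <+: y)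
    (u v : List α) : x ++ u < y ++ v :=
  myLex.append_aux (myLex.lex_of_lt hxy) hpre u v

/-- a prefix with matching unique last element equals the whole list -/
theorem prefix_eq_of_last {s s' : List α} {c : α}
    (hp : s <+: s') (hs : s ≠ []) (hs' : s' ≠ [])
    (hls : s.getLast hs = c) (hls' : s'.getLast hs' = c)
    (hcount : s'.count c = 1) : s = s' := by
  obtain ⟨r, hr⟩ := hp
  rcases eq_or_ne r [] with rfl | hrne
  · rw [← hr, List.append_nil]
  · exfalso
    have hcin : c ∈ s := hls ▸ List.getLast_mem hs
    have hlast_r : r.getLast hrne = c := by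
      subst hr
      rw [← hls']
      exact (List.getLast_append_of_ne_nil _ hrne).symm
    have hcr : c ∈ r := hlast_r ▸ List.getLast_mem hrne
    have : 2 ≤ s'.count c := by
      rw [← hr, List.count_append]
      have h1 : 1 ≤ s.count c := List.one_le_count_iff.mpr hcin
      have h2 : 1 ≤ r.count c := List.one_le_count_iff.mpr hcr
      omega
    omega

theorem mem_pair_sublist {a b : α} {l : List α} (ha : a ∈ l) (hb : b ∈ l)
    (hne : a ≠ b) : [a, b] <+ l ∨ [b, a] <+ l := by
  induction l with
  | nil => simp at ha
  | cons x xs ih =>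
    rcases List.mem_cons.mp ha with rfl | ha'
    · have hb' : b ∈ xs := by
        rcases List.mem_cons.mp hb with rfl | h
        · exact absurd rfl hne
        · exact h
      left
      exact (List.singleton_sublist.mpr hb').cons₂ a
    · rcases List.mem_cons.mp hb with rfl | hb'
      · right
        exact (List.singleton_sublist.mpr ha').cons₂ b
      · rcases ih ha' hb' with h | h
        · exact Or.inl (h.cons x)
        · exact Or.inr (h.cons x)

theorem pair_sublist_antisymm {α : Type*} {a b : α} {l : List α} (hnd : l.Nodup)
    (h1 : [a, b] <+ l) (h2 : [b, a] <+ l) : a = b := by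
  by_contra hne
  induction l with
  | nil => simp at h1
  | cons x xs ih =>
    have hx : x ∉ xs := (List.nodup_cons.mp hnd).1
    have hnd' : xs.Nodup := (List.nodup_cons.mp hnd).2
    cases h1 with
    | cons _ h1' =>
      cases h2 with
      | cons _ h2' => exact ih hnd' h1' h2'
      | cons_cons _ h2' =>
        -- x = b, [a] <+ xs ... and [a,b] <+ xs so b ∈ xs
        exact hx (h1'.subset (by simp))
    | cons_cons _ h1' =>
      -- x = a, [b] <+ xs
      cases h2 with
      | cons _ h2' => exact hx (h2'.subset (by simp))
      | cons_cons _ h2' => exact hx (h2'.subset (by simp))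

end Gen

section Sent
variable [LinearOrder A] [Inhabited A] (t0 t1 : List A)

theorem getLast!_eq' (l : List A) (h : l ≠ []) : l.getLast! = l.getLast h :=
  List.getLast!_of_getLast? (List.getLast?_eq_getLast h)

private theorem two_le_count_aux {α} [DecidableEq α] {l : List α} {c : α} {i j : ℕ}
    (hi : i < l.length) (hj : j < l.length) (hij : i < j)
    (hc : l[i] = c) (hc' : l[j] = c) : 2 ≤ l.count c := by
  have h1 : l.count c = (l.take j).count c + (l.drop j).count c := by
    rw [← List.count_append, List.take_append_drop]
  have hdrop : l.drop j = l[j] :: l.drop (j + 1) := List.drop_eq_getElem_cons hj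
  have hmem1 : c ∈ l.take j := by
    have hlt : i < (l.take j).length := by simp; omega
    have : (l.take j)[i] = l[i] := List.getElem_take ..
    rw [← hc, ← this]
    exact List.getElem_mem hlt
  have h2 : 1 ≤ (l.take j).count c := List.one_le_count_iff.mpr hmem1
  have h3 : 1 ≤ (l.drop j).count c := by
    rw [hdrop, hc', List.count_cons_self]; omega
  omega

theorem two_le_count_of_getElem {α} [DecidableEq α] {l : List α} {c : α} {i j : ℕ}
    (hi : i < l.length) (hj : j < l.length) (hij : i ≠ j)
    (hc : l[i] = c) (hc' : l[j] = c) : 2 ≤ l.count c := by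
  rcases lt_or_gt_of_ne hij with h | h
  · exact two_le_count_aux hi hj h hc hc'
  · exact two_le_count_aux hj hi h hc' hc

variable (hsent : Sentinels t0 t1)
include hsent

theorem t_getElem_d0 : (t0 ++ t1)[t0.length - 1]'(by
      rcases hsent with ⟨h0, h1, -⟩
      have := List.length_pos_iff.mpr h0
      simp; omega) = t0.getLast! := by
  rcases hsent with ⟨h0, h1, -⟩
  have hl := List.length_pos_iff.mpr h0
  exact (List.getElem_append_left (by omega)).trans
    ((List.getLast_eq_getElem h0).symm.trans (getLast!_eq' t0 h0).symm)

theorem t_getElem_d1 : (t0 ++ t1)[t0.length + t1.length - 1]'(by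
      rcases hsent with ⟨h0, h1, -⟩
      have := List.length_pos_iff.mpr h1
      simp; omega) = t1.getLast! := by
  rcases hsent with ⟨h0, h1, -⟩
  have hl := List.length_pos_iff.mpr h1
  refine (List.getElem_append_right (by omega)).trans ?_
  have : (t1[t0.length + t1.length - 1 - t0.length]'(by omega) : A)
      = t1[t1.length - 1]'(by omega) := by congr 1; omega

  exact this.trans ((List.getLast_eq_getElem h1).symm.trans (getLast!_eq' t1 h1).symm)

theorem getElem_eq_d0_iff {p : ℕ} (hp : p < t0.length + t1.length)
    (he : (t0 ++ t1)[p]'(by simpa using hp) = t0.getLast!) : p = t0.length - 1 := by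
  by_contra hne
  have h2 := two_le_count_of_getElem (c := t0.getLast!)
    (by simpa using hp)
    (l := t0 ++ t1) (j := t0.length - 1)
    (by rcases hsent with ⟨h0, -⟩; have := List.length_pos_iff.mpr h0; simp; omega)
    hne he (t_getElem_d0 t0 t1 hsent)
  rcases hsent with ⟨-, -, -, -, -, hc, -⟩
  omega

theorem getElem_eq_d1_iff {p : ℕ} (hp : p < t0.length + t1.length)
    (he : (t0 ++ t1)[p]'(by simpa using hp) = t1.getLast!) :
    p = t0.length + t1.length - 1 := by
  by_contra hne
  have h2 := two_le_count_of_getElem (c := t1.getLast!)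
    (by simpa using hp)
    (l := t0 ++ t1) (j := t0.length + t1.length - 1)
    (by rcases hsent with ⟨-, h1, -⟩; have := List.length_pos_iff.mpr h1; simp; omega)
    hne he (t_getElem_d1 t0 t1 hsent)
  rcases hsent with ⟨-, -, -, -, -, -, hc⟩
  omega

theorem d0_lt_getElem {p : ℕ} (hp : p < t0.length + t1.length)
    (hne : p ≠ t0.length - 1) :
    t0.getLast! < (t0 ++ t1)[p]'(by simpa using hp) := by
  have hmem : (t0 ++ t1)[p]'(by simpa using hp) ∈ t0 ++ t1 := List.getElem_mem _
  refine hsent.2.2.2.1 _ hmem fun he => hne (getElem_eq_d0_iff t0 t1 hsent hp he)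

theorem d1_lt_getElem {p : ℕ} (hp : p < t0.length + t1.length)
    (hne0 : p ≠ t0.length - 1) (hne1 : p ≠ t0.length + t1.length - 1) :
    t1.getLast! < (t0 ++ t1)[p]'(by simpa using hp) := by
  have hmem : (t0 ++ t1)[p]'(by simpa using hp) ∈ t0 ++ t1 := List.getElem_mem _
  refine hsent.2.2.2.2.1 _ hmem (fun he => hne0 (getElem_eq_d0_iff t0 t1 hsent hp he))
    (fun he => hne1 (getElem_eq_d1_iff t0 t1 hsent hp he))

theorem own_getLast {q : ℕ} (hq : q < t0.length + t1.length) :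
    (own t0 t1 q).getLast (own_ne_nil t0 t1 hq) =
      (if q < t0.length then t0.getLast! else t1.getLast!) := by
  rcases hsent with ⟨h0, h1, -⟩
  unfold own
  split
  · rw [getLast!_eq' t0 h0]
    rw [List.getLast_eq_getElem, List.getLast_eq_getElem, List.getElem_drop]
    congr 1
    simp
    omega
  · rw [getLast!_eq' t1 h1]
    rw [List.getLast_eq_getElem, List.getLast_eq_getElem, List.getElem_drop]
    congr 1
    simp
    omega

theorem count_own {q : ℕ} (hq : q < t0.length + t1.length) :
    (own t0 t1 q).count (if q < t0.length then t0.getLast! else t1.getLast!) = 1 := by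
  have hmem : (if q < t0.length then t0.getLast! else t1.getLast!) ∈ own t0 t1 q := by
    rw [← own_getLast t0 t1 hsent hq]
    exact List.getLast_mem _
  have hle : (own t0 t1 q).count (if q < t0.length then t0.getLast! else t1.getLast!) ≤ 1 := by
    have hsub : own t0 t1 q <+ t0 ++ t1 := by
      unfold own
      split
      · exact (List.drop_sublist _ _).trans (List.sublist_append_left _ _)
      · exact (List.drop_sublist _ _).trans (List.sublist_append_right _ _)
    have := hsub.count_le (if q < t0.length then t0.getLast! else t1.getLast!)
    rcases hsent with ⟨-, -, -, -, -, hc0, hc1⟩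
    split at this <;> split <;> omega
  have := List.one_le_count_iff.mpr hmem
  omega

theorem own_not_prefix {q q' : ℕ} (hq : q < t0.length + t1.length)
    (hq' : q' < t0.length + t1.length) (hb : gbit t0.length q = gbit t0.length q')
    (hne : q ≠ q') : ¬ own t0 t1 q <+: own t0 t1 q' := by
  intro hpre
  have hbranch : (if q < t0.length then t0.getLast! else t1.getLast!) =
      (if q' < t0.length then t0.getLast! else t1.getLast!) := by
    unfold gbit at hb
    simp only [decide_eq_decide] at hb
    split <;> split <;> first | rfl | omega
  have heq : own t0 t1 q = own t0 t1 q' :=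
    prefix_eq_of_last hpre (own_ne_nil t0 t1 hq) (own_ne_nil t0 t1 hq')
      (own_getLast t0 t1 hsent hq)
      (by rw [own_getLast t0 t1 hsent hq', ← hbranch])
      (by rw [hbranch]; exact count_own t0 t1 hsent hq')
  exact hne (own_inj t0 t1 hq hq' hb heq)

theorem drop_t_eq {q : ℕ} (hq : q < t0.length + t1.length) :
    (t0 ++ t1).drop q = own t0 t1 q ++ (if q < t0.length then t1 else []) := by
  rw [List.drop_append]
  unfold own
  split
  · have : q - t0.length = 0 := by omega
    rw [this]
    simp
  · have : t0.drop q = [] := List.drop_eq_nil_of_le (by omega)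
    rw [this]
    simp

theorem drop_t_lt_of_own_lt {q q' : ℕ} (hq : q < t0.length + t1.length)
    (hq' : q' < t0.length + t1.length) (hb : gbit t0.length q = gbit t0.length q')
    (hlt : own t0 t1 q < own t0 t1 q') :
    (t0 ++ t1).drop q < (t0 ++ t1).drop q' := by
  have hne : q ≠ q' := by
    intro h
    subst h
    exact lt_irrefl _ hlt
  rw [drop_t_eq t0 t1 hsent hq, drop_t_eq t0 t1 hsent hq']
  have hbr : (if q < t0.length then t1 else []) = (if q' < t0.length then t1 else []) := by
    unfold gbit at hb
    simp only [decide_eq_decide] at hb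
    split <;> split <;> first | rfl | omega
  rw [hbr]
  exact myLex.append_lt_append hlt (own_not_prefix t0 t1 hsent hq hq' hb hne) _ _

theorem gkey_le_of_own_lt {h q q' : ℕ} (hq : q < t0.length + t1.length)
    (hq' : q' < t0.length + t1.length) (hb : gbit t0.length q = gbit t0.length q')
    (hlt : own t0 t1 q < own t0 t1 q') : gkey t0 t1 h q ≤ gkey t0 t1 h q' :=
  myLex.take_le_take (le_of_lt (drop_t_lt_of_own_lt t0 t1 hsent hq hq' hb hlt)) h

theorem own_lt_of_K_lt {h q q' : ℕ} (hq : q < t0.length + t1.length)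
    (hq' : q' < t0.length + t1.length) (hb : gbit t0.length q = gbit t0.length q')
    (hK : K t0 t1 h q < K t0 t1 h q') : own t0 t1 q < own t0 t1 q' := by
  rcases lt_trichotomy (own t0 t1 q) (own t0 t1 q') with h' | h' | h'
  · exact h'
  · exact absurd (own_inj t0 t1 hq hq' hb h') (fun he => ne_of_lt hK (by rw [he]))
  · exfalso
    have hle : gkey t0 t1 h q' ≤ gkey t0 t1 h q :=
      gkey_le_of_own_lt t0 t1 hsent hq' hq hb.symm h'
    unfold K at hK
    rw [Prod.Lex.lt_iff] at hK
    rcases hK with hK | ⟨he, hK⟩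
    · exact absurd (lt_of_lt_of_le hK hle) (lt_irrefl _)
    · rw [Prod.Lex.lt_iff] at hK
      rcases hK with hK | ⟨hbe, hK⟩
      · simp only [ofLex_toLex] at hK
        rw [hb] at hK
        exact lt_irrefl _ hK
      · exact absurd (lt_trans hK h') (lt_irrefl _)

end Sent

section PermHelp

theorem eq_of_perm_of_pairwise {α : Type*} {r : α → α → Prop}
    (hasym : ∀ a b, r a b → r b a → False) {X Y : List α} (hp : X ~ Y)
    (hX : X.Pairwise r) (hY : Y.Pairwise r) : X = Y := by
  haveI : IsAntisymm α r := ⟨fun a b h h' => (hasym a b h h').elim⟩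
  exact List.Perm.eq_of_pairwise (fun a b _ _ h h' => (hasym a b h h').elim) hX hY hp

theorem perm_of_nodup_mem_iff {l l' : List ℕ} (h1 : l.Nodup) (h2 : l'.Nodup)
    (h : ∀ a, a ∈ l ↔ a ∈ l') : l ~ l' :=
  List.perm_of_nodup_nodup_toFinset_eq h1 h2 (by ext a; simp [List.mem_toFinset, h a])

theorem map_bij_perm {f : ℕ → ℕ} {n : ℕ} (hf : Set.BijOn f (Set.Iio n) (Set.Iio n)) :
    (List.range n).map f ~ List.range n := by
  apply perm_of_nodup_mem_iff
  · refine (List.nodup_range (n := n)).map_on ?_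
    intro x hx y hy hxy
    exact hf.injOn (by simpa using List.mem_range.mp hx)
      (by simpa using List.mem_range.mp hy) hxy
  · exact List.nodup_range
  · intro a
    simp only [List.mem_map, List.mem_range]
    constructor
    · rintro ⟨i, hi, rfl⟩
      simpa using hf.mapsTo (by simpa using hi)
    · intro ha
      obtain ⟨i, hi, he⟩ := hf.surjOn (by simpa using ha : a ∈ Set.Iio n)
      exact ⟨i, by simpa using hi, he⟩

end PermHelp

section Filters
variable [LinearOrder A] [Inhabited A] (t0 t1 : List A) (sa0 sa1 : ℕ → ℕ)

theorem filter_range_bit0 :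
    (List.range (t0.length + t1.length)).filter (fun q => !gbit t0.length q)
      = List.range t0.length := by
  rw [List.range_add, List.filter_append]
  have h1 : (List.range t0.length).filter (fun q => !gbit t0.length q)
      = List.range t0.length :=
    List.filter_eq_self.mpr (fun a ha => by
      have := List.mem_range.mp ha
      simp [gbit]
      omega)
  have h2 : (((List.range t1.length).map (t0.length + ·)).filter
      (fun q => !gbit t0.length q)) = [] := by
    rw [List.filter_eq_nil_iff]
    intro a ha
    simp only [List.mem_map] at ha
    obtain ⟨i, -, rfl⟩ := ha
    simp [gbit]
  rw [h1, h2, List.append_nil]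

theorem filter_range_bit1 :
    (List.range (t0.length + t1.length)).filter (fun q => gbit t0.length q)
      = (List.range t1.length).map (t0.length + ·) := by
  rw [List.range_add, List.filter_append]
  have h1 : (List.range t0.length).filter (fun q => gbit t0.length q) = [] := by
    rw [List.filter_eq_nil_iff]
    intro a ha
    have := List.mem_range.mp ha
    simp [gbit]
    omega
  have h2 : (((List.range t1.length).map (t0.length + ·)).filter
      (fun q => gbit t0.length q)) = ((List.range t1.length).map (t0.length + ·)) :=
    List.filter_eq_self.mpr (fun a ha => by
      simp only [List.mem_map] at ha
      obtain ⟨i, -, rfl⟩ := ha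
      simp [gbit])
  rw [h1, h2, List.nil_append]

variable (hsent : Sentinels t0 t1)
include hsent

theorem filter_S_t0 (hsa0 : isSuffixArray t0 sa0) (h : ℕ) :
    (S t0 t1 h).filter (fun q => !gbit t0.length q)
      = (List.range t0.length).map sa0 := by
  have hmaps : ∀ i < t0.length, sa0 i < t0.length := by
    intro i hi
    simpa using hsa0.1.mapsTo (by simpa using hi)
  refine eq_of_perm_of_pairwise
    (r := fun q q' => own t0 t1 q < own t0 t1 q')
    (fun a b hab hba => absurd (lt_trans hab hba) (lt_irrefl _)) ?_ ?_ ?_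
  · exact (((S_perm t0 t1 h).filter _).trans
      (by rw [filter_range_bit0])).trans (map_bij_perm hsa0.1).symm
  · refine ((S_pairwise t0 t1 h).filter _).imp_of_mem ?_
    intro a b ha hb hab
    have ha' := List.mem_filter.mp ha
    have hb' := List.mem_filter.mp hb
    have haS := (S_mem t0 t1).mp ha'.1
    have hbS := (S_mem t0 t1).mp hb'.1
    have hbits : gbit t0.length a = gbit t0.length b := by
      have h1 := ha'.2
      have h2 := hb'.2
      simp only [Bool.not_eq_true'] at h1 h2
      rw [h1, h2]
    exact own_lt_of_K_lt t0 t1 hsent haS hbS hbits hab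
  · rw [List.pairwise_map]
    refine (List.pairwise_lt_range (n := t0.length)).imp_of_mem ?_
    intro i j hi hj hij
    have hi' := List.mem_range.mp hi
    have hj' := List.mem_range.mp hj
    have := hsa0.2 i j hij hj'
    have e1 : own t0 t1 (sa0 i) = t0.drop (sa0 i) := by
      unfold own; rw [if_pos (hmaps i hi')]
    have e2 : own t0 t1 (sa0 j) = t0.drop (sa0 j) := by
      unfold own; rw [if_pos (hmaps j hj')]
    rw [e1, e2]
    exact this

theorem filter_S_t1 (hsa1 : isSuffixArray t1 sa1) (h : ℕ) :
    (S t0 t1 h).filter (fun q => gbit t0.length q)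
      = (List.range t1.length).map (fun i => t0.length + sa1 i) := by
  have hmaps : ∀ i < t1.length, sa1 i < t1.length := by
    intro i hi
    simpa using hsa1.1.mapsTo (by simpa using hi)
  refine eq_of_perm_of_pairwise
    (r := fun q q' => own t0 t1 q < own t0 t1 q')
    (fun a b hab hba => absurd (lt_trans hab hba) (lt_irrefl _)) ?_ ?_ ?_
  · refine (((S_perm t0 t1 h).filter _).trans (by rw [filter_range_bit1])).trans ?_
    have : (List.range t1.length).map (fun i => t0.length + sa1 i)
        = ((List.range t1.length).map sa1).map (t0.length + ·) := by
      rw [List.map_map]; rfl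
    rw [this]
    exact ((map_bij_perm hsa1.1).map _).symm
  · refine ((S_pairwise t0 t1 h).filter _).imp_of_mem ?_
    intro a b ha hb hab
    have ha' := List.mem_filter.mp ha
    have hb' := List.mem_filter.mp hb
    have haS := (S_mem t0 t1).mp ha'.1
    have hbS := (S_mem t0 t1).mp hb'.1
    have hbits : gbit t0.length a = gbit t0.length b := by
      rw [ha'.2, hb'.2]
    exact own_lt_of_K_lt t0 t1 hsent haS hbS hbits hab
  · rw [List.pairwise_map]
    refine (List.pairwise_lt_range (n := t1.length)).imp_of_mem ?_
    intro i j hi hj hij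
    have hi' := List.mem_range.mp hi
    have hj' := List.mem_range.mp hj
    have := hsa1.2 i j hij hj'
    have e1 : own t0 t1 (t0.length + sa1 i) = t1.drop (sa1 i) := by
      unfold own
      rw [if_neg (by omega)]
      congr 1
      omega
    have e2 : own t0 t1 (t0.length + sa1 j) = t1.drop (sa1 j) := by
      unfold own
      rw [if_neg (by omega)]
      congr 1
      omega
    rw [e1, e2]
    exact this

end Filters

section KeyStep
variable [LinearOrder A] [Inhabited A] (t0 t1 : List A)

theorem K_lt_iff {h q q' : ℕ} :
    K t0 t1 h q < K t0 t1 h q' ↔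
      (gkey t0 t1 h q < gkey t0 t1 h q'
        ∨ (gkey t0 t1 h q = gkey t0 t1 h q' ∧ (gbit t0.length q < gbit t0.length q'
          ∨ (gbit t0.length q = gbit t0.length q' ∧ own t0 t1 q < own t0 t1 q')))) := by
  unfold K
  rw [Prod.Lex.lt_iff, Prod.Lex.lt_iff]
  simp only [ofLex_toLex]

def gchar (q : ℕ) : A := (t0 ++ t1).getD (gpred t0.length t1.length q) default

theorem gchar_eq {q : ℕ} (h0 : 0 < t0.length) (h1 : 0 < t1.length)
    (hq : q < t0.length + t1.length) :
    gchar t0 t1 q = (t0 ++ t1)[gpred t0.length t1.length q]'(by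
      simpa using gpred_lt t0 t1 h0 h1 hq) :=
  List.getD_eq_getElem _ _ _

theorem gkey_succ {h p : ℕ} (hp : p < t0.length + t1.length) :
    gkey t0 t1 (h + 1) p = (t0 ++ t1)[p]'(by simpa using hp) :: gkey t0 t1 h (p + 1) := by
  unfold gkey
  rw [List.drop_eq_getElem_cons (by simpa using hp), List.take_succ_cons]

theorem gpred_add_one {q : ℕ} (hq : q < t0.length + t1.length) (h0 : q ≠ 0)
    (hn : q ≠ t0.length) : gpred t0.length t1.length q + 1 = q := by
  unfold gpred
  rw [if_neg h0, if_neg hn]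
  omega

theorem gkey_pred_head {h q : ℕ} (h0 : 0 < t0.length) (h1 : 0 < t1.length)
    (hq : q < t0.length + t1.length) :
    ∃ w, gkey t0 t1 (h + 1) (gpred t0.length t1.length q) = gchar t0 t1 q :: w := by
  exact ⟨gkey t0 t1 h (gpred t0.length t1.length q + 1), by
    rw [gkey_succ t0 t1 (gpred_lt t0 t1 h0 h1 hq), gchar_eq t0 t1 h0 h1 hq]⟩

theorem gkey_pred_generic {h q : ℕ} (h0 : 0 < t0.length) (h1 : 0 < t1.length)
    (hq : q < t0.length + t1.length) (hq0 : q ≠ 0) (hqn : q ≠ t0.length) :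
    gkey t0 t1 (h + 1) (gpred t0.length t1.length q)
      = gchar t0 t1 q :: gkey t0 t1 h q := by
  rw [gkey_succ t0 t1 (gpred_lt t0 t1 h0 h1 hq), gchar_eq t0 t1 h0 h1 hq,
    gpred_add_one t0 t1 hq hq0 hqn]

variable (hsent : Sentinels t0 t1)
include hsent

theorem gchar_eq_d0_iff {q : ℕ} (hq : q < t0.length + t1.length) :
    gchar t0 t1 q = t0.getLast! ↔ q = 0 := by
  have h0 := List.length_pos_iff.mpr hsent.1
  have h1 := List.length_pos_iff.mpr hsent.2.1
  rw [gchar_eq t0 t1 h0 h1 hq]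
  constructor
  · intro he
    have := getElem_eq_d0_iff t0 t1 hsent (gpred_lt t0 t1 h0 h1 hq) he
    unfold gpred at this
    split at this
    · assumption
    · split at this <;> omega
  · rintro rfl
    have : gpred t0.length t1.length 0 = t0.length - 1 := by unfold gpred; simp
    simp only [this]
    exact t_getElem_d0 t0 t1 hsent

theorem gchar_eq_d1_iff {q : ℕ} (hq : q < t0.length + t1.length) :
    gchar t0 t1 q = t1.getLast! ↔ q = t0.length := by
  have h0 := List.length_pos_iff.mpr hsent.1
  have h1 := List.length_pos_iff.mpr hsent.2.1
  rw [gchar_eq t0 t1 h0 h1 hq]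
  constructor
  · intro he
    have := getElem_eq_d1_iff t0 t1 hsent (gpred_lt t0 t1 h0 h1 hq) he
    unfold gpred at this
    split at this
    · omega
    · split at this <;> omega
  · rintro rfl
    have : gpred t0.length t1.length t0.length = t0.length + t1.length - 1 := by
      unfold gpred
      rw [if_neg (by omega), if_pos rfl]
    simp only [this]
    exact t_getElem_d1 t0 t1 hsent

omit hsent

theorem own_pred_cons {q : ℕ} (hq : q < t0.length + t1.length) (hq0 : q ≠ 0)
    (hqn : q ≠ t0.length) :
    own t0 t1 (gpred t0.length t1.length q) = gchar t0 t1 q :: own t0 t1 q := by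
  have hg : gpred t0.length t1.length q = q - 1 := by
    unfold gpred
    rw [if_neg hq0, if_neg hqn]
  have h0 : 0 < t0.length ∨ t0.length < q := by omega
  rw [hg]
  rcases Nat.lt_or_ge q t0.length with hlt | hge
  · -- t0 side
    have h0 : 0 < t0.length := by omega
    have h1' : q - 1 < t0.length := by omega
    unfold own gchar gpred
    rw [if_pos h1', if_pos hlt, if_neg hq0, if_neg hqn,
      List.getD_eq_getElem _ _ (by simp; omega),
      List.drop_eq_getElem_cons (by omega)]
    have : q - 1 + 1 = q := by omega
    rw [this, List.getElem_append_left (by omega)]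
  · -- t1 side
    have hgt : t0.length < q := by omega
    have h1' : ¬ q - 1 < t0.length := by omega
    unfold own gchar gpred
    rw [if_neg h1', if_neg hq0, if_neg hqn, if_neg (show ¬ q < t0.length by omega),
      List.getD_eq_getElem _ _ (by simp; omega),
      List.drop_eq_getElem_cons (show q - 1 - t0.length < t1.length by omega)]
    have e1 : q - 1 - t0.length + 1 = q - t0.length := by omega
    rw [e1, List.getElem_append_right (by omega)]

end KeyStep

section SortStep
variable [LinearOrder A] [Inhabited A] (t0 t1 : List A)

theorem gpred_range_perm (h0 : 0 < t0.length) (h1 : 0 < t1.length) :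
    (List.range (t0.length + t1.length)).map (gpred t0.length t1.length)
      ~ List.range (t0.length + t1.length) := by
  apply perm_of_nodup_mem_iff
  · refine List.nodup_range.map_on ?_
    intro x hx y hy hxy
    have hx' := List.mem_range.mp hx
    have hy' := List.mem_range.mp hy
    simp only [gpred] at hxy
    split_ifs at hxy <;> omega
  · exact List.nodup_range
  · intro a
    simp only [List.mem_map, List.mem_range]
    constructor
    · rintro ⟨i, hi, rfl⟩
      exact gpred_lt t0 t1 h0 h1 hi
    · intro ha
      rcases eq_or_ne a (t0.length - 1) with rfl | ha1
      · exact ⟨0, by omega, by simp [gpred]⟩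
      · rcases eq_or_ne a (t0.length + t1.length - 1) with rfl | ha2
        · refine ⟨t0.length, by omega, ?_⟩
          have hne : t0.length ≠ 0 := by omega
          simp [gpred, hne]
        · refine ⟨a + 1, by omega, ?_⟩
          have hne : a + 1 ≠ t0.length := by omega
          simp [gpred, hne]

variable (hsent : Sentinels t0 t1)
include hsent

theorem M_pairwise (h : ℕ) :
    ((S t0 t1 h).mergeSort
        (fun q q' => decide (gchar t0 t1 q ≤ gchar t0 t1 q'))).Pairwise
      (fun q q' => K t0 t1 (h + 1) (gpred t0.length t1.length q)
        < K t0 t1 (h + 1) (gpred t0.length t1.length q')) := by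
  have h0 := List.length_pos_iff.mpr hsent.1
  have h1 := List.length_pos_iff.mpr hsent.2.1
  have htrans : ∀ a b c : ℕ, decide (gchar t0 t1 a ≤ gchar t0 t1 b)
      → decide (gchar t0 t1 b ≤ gchar t0 t1 c)
      → decide (gchar t0 t1 a ≤ gchar t0 t1 c) := by
    intro a b c hab hbc
    simp only [decide_eq_true_eq] at *
    exact le_trans hab hbc
  have htotal : ∀ a b : ℕ, decide (gchar t0 t1 a ≤ gchar t0 t1 b)
      || decide (gchar t0 t1 b ≤ gchar t0 t1 a) := by
    intro a b
    simpa using le_total _ _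
  set M := (S t0 t1 h).mergeSort
    (fun q q' => decide (gchar t0 t1 q ≤ gchar t0 t1 q')) with hM
  have hperm : M ~ S t0 t1 h := List.mergeSort_perm _ _
  have hnd : M.Nodup := hperm.nodup_iff.mpr (S_nodup t0 t1 h)
  have hsorted := List.pairwise_mergeSort htrans htotal (S t0 t1 h)
  rw [List.pairwise_iff_forall_sublist]
  intro q q' hsub
  have hmemq : q ∈ S t0 t1 h := hperm.subset (hsub.subset (by simp))
  have hmemq' : q' ∈ S t0 t1 h := hperm.subset (hsub.subset (by simp))
  have hqlt : q < t0.length + t1.length := (S_mem t0 t1).mp hmemq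
  have hq'lt : q' < t0.length + t1.length := (S_mem t0 t1).mp hmemq'
  have hle : gchar t0 t1 q ≤ gchar t0 t1 q' := by
    have := List.pairwise_iff_forall_sublist.mp hsorted hsub
    simpa using this
  have hne : q ≠ q' :=
    List.pairwise_iff_forall_sublist.mp (hnd : M.Pairwise (· ≠ ·)) hsub
  rcases lt_or_eq_of_le hle with hlt | heq
  · rw [K_lt_iff]
    left
    obtain ⟨w, hw⟩ := gkey_pred_head t0 t1 (h := h) h0 h1 hqlt
    obtain ⟨w', hw'⟩ := gkey_pred_head t0 t1 (h := h) h0 h1 hq'lt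
    rw [hw, hw']
    exact myLex.cons_lt_cons_of_lt hlt _ _
  · have hq0 : q ≠ 0 := by
      rintro rfl
      have hd0 : gchar t0 t1 0 = t0.getLast! := (gchar_eq_d0_iff t0 t1 hsent hqlt).mpr rfl
      have : q' = 0 := (gchar_eq_d0_iff t0 t1 hsent hq'lt).mp (by rw [← heq, hd0])
      exact hne this.symm
    have hq'0 : q' ≠ 0 := by
      rintro rfl
      have hd0 : gchar t0 t1 0 = t0.getLast! := (gchar_eq_d0_iff t0 t1 hsent hq'lt).mpr rfl
      have : q = 0 := (gchar_eq_d0_iff t0 t1 hsent hqlt).mp (by rw [heq, hd0])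
      exact hne this
    have hqn : q ≠ t0.length := by
      rintro rfl
      have hd1 : gchar t0 t1 t0.length = t1.getLast! :=
        (gchar_eq_d1_iff t0 t1 hsent hqlt).mpr rfl
      have : q' = t0.length := (gchar_eq_d1_iff t0 t1 hsent hq'lt).mp (by rw [← heq, hd1])
      exact hne this.symm
    have hq'n : q' ≠ t0.length := by
      rintro rfl
      have hd1 : gchar t0 t1 t0.length = t1.getLast! :=
        (gchar_eq_d1_iff t0 t1 hsent hq'lt).mpr rfl
      have : q = t0.length := (gchar_eq_d1_iff t0 t1 hsent hqlt).mp (by rw [heq, hd1])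
      exact hne this
    have hsub' : [q, q'] <+ S t0 t1 h := by
      rcases mem_pair_sublist hmemq hmemq' hne with hs | hs
      · exact hs
      · exfalso
        have h2 : [q', q] <+ M :=
          List.pair_sublist_mergeSort htrans htotal (by simp [heq]) hs
        exact hne (pair_sublist_antisymm hnd hsub h2)
    have hKlt : K t0 t1 h q < K t0 t1 h q' :=
      List.pairwise_iff_forall_sublist.mp (S_pairwise t0 t1 h) hsub'
    rw [K_lt_iff] at hKlt ⊢
    rw [gkey_pred_generic t0 t1 h0 h1 hqlt hq0 hqn,
      gkey_pred_generic t0 t1 h0 h1 hq'lt hq'0 hq'n, heq]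
    rcases hKlt with hk | ⟨hk, hrest⟩
    · left
      exact myLex.cons_lt_cons hk
    · right
      refine ⟨by rw [hk], ?_⟩
      rw [gbit_gpred t0 t1 h0 h1 hqlt, gbit_gpred t0 t1 h0 h1 hq'lt]
      rcases hrest with hb | ⟨hb, ho⟩
      · left; exact hb
      · right
        refine ⟨hb, ?_⟩
        rw [own_pred_cons t0 t1 hqlt hq0 hqn, own_pred_cons t0 t1 hq'lt hq'0 hq'n, heq]
        exact myLex.cons_lt_cons ho

theorem S_succ (h : ℕ) :
    S t0 t1 (h + 1) = ((S t0 t1 h).mergeSort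
      (fun q q' => decide (gchar t0 t1 q ≤ gchar t0 t1 q'))).map
        (gpred t0.length t1.length) := by
  have h0 := List.length_pos_iff.mpr hsent.1
  have h1 := List.length_pos_iff.mpr hsent.2.1
  refine (eq_of_perm_of_pairwise
    (r := fun q q' => K t0 t1 (h + 1) q < K t0 t1 (h + 1) q')
    (fun a b hab hba => absurd (lt_trans hab hba) (lt_irrefl _)) ?_ ?_ ?_).symm
  · refine (((List.mergeSort_perm _ _).map _).trans ?_).trans (S_perm t0 t1 (h + 1)).symm
    exact ((S_perm t0 t1 h).map _).trans (gpred_range_perm t0 t1 h0 h1)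
  · exact List.pairwise_map.mpr (M_pairwise t0 t1 hsent h)
  · exact S_pairwise t0 t1 (h + 1)

end SortStep

section CountHelp

theorem count_true_map_gbit (X : List ℕ) (n0 : ℕ) :
    ((X.map (gbit n0)).count true) = X.countP (fun q => gbit n0 q) := by
  induction X with
  | nil => rfl
  | cons x xs ih =>
    cases hgb : gbit n0 x <;>
      simp [List.count_cons, List.countP_cons, hgb, ih]

theorem count_false_map_gbit (X : List ℕ) (n0 : ℕ) :
    ((X.map (gbit n0)).count false) = X.countP (fun q => !gbit n0 q) := by
  induction X with
  | nil => rfl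
  | cons x xs ih =>
    cases hgb : gbit n0 x <;>
      simp [List.count_cons, List.countP_cons, hgb, ih]

theorem countP_lt_and_getElem (p : ℕ → Bool) (X : List ℕ) (k : ℕ) (hk : k < X.length)
    (hp : p (X[k]) = true) :
    ∃ (_ : (X.take k).countP p < (X.filter p).length),
      (X.filter p).getD ((X.take k).countP p) 0 = X[k] := by
  have hf : X.filter p = (X.take k).filter p ++ X[k] :: (X.drop (k + 1)).filter p := by
    conv_lhs => rw [← List.take_append_drop k X, List.drop_eq_getElem_cons hk]
    rw [List.filter_append, List.filter_cons_of_pos hp]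
  have hcp : (X.take k).countP p = ((X.take k).filter p).length :=
    List.countP_eq_length_filter
  have hlt : (X.take k).countP p < (X.filter p).length := by
    rw [hf, hcp, List.length_append, List.length_cons]
    omega
  refine ⟨hlt, ?_⟩
  rw [hf, hcp, List.getD_append_right _ _ _ _ (le_refl _), Nat.sub_self]
  rfl

end CountHelp

section ZEq
variable [LinearOrder A] [Inhabited A] (t0 t1 : List A) (sa0 sa1 : ℕ → ℕ)
variable (hsent : Sentinels t0 t1) (hsa0 : isSuffixArray t0 sa0)
  (hsa1 : isSuffixArray t1 sa1)

include hsent hsa0 hsa1 in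
theorem S_zero : S t0 t1 0
    = (List.range t0.length).map sa0
      ++ (List.range t1.length).map (fun i => t0.length + sa1 i) := by
  have hmaps0 : ∀ i < t0.length, sa0 i < t0.length := fun i hi => by
    simpa using hsa0.1.mapsTo (by simpa using hi)
  have hmaps1 : ∀ i < t1.length, sa1 i < t1.length := fun i hi => by
    simpa using hsa1.1.mapsTo (by simpa using hi)
  refine eq_of_perm_of_pairwise
    (r := fun q q' => K t0 t1 0 q < K t0 t1 0 q')
    (fun a b hab hba => absurd (lt_trans hab hba) (lt_irrefl _))
    ?_ (S_pairwise t0 t1 0) ?_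
  · refine (S_perm t0 t1 0).trans ?_
    rw [List.range_add]
    refine ((map_bij_perm hsa0.1).symm.append ?_)
    have : (List.range t1.length).map (fun i => t0.length + sa1 i)
        = ((List.range t1.length).map sa1).map (t0.length + ·) := by
      rw [List.map_map]; rfl
    rw [this]
    exact ((map_bij_perm hsa1.1).map _).symm
  · rw [List.pairwise_append]
    refine ⟨?_, ?_, ?_⟩
    · rw [List.pairwise_map]
      refine (List.pairwise_lt_range (n := t0.length)).imp_of_mem ?_
      intro i j hi hj hij
      have hi' := hmaps0 i (List.mem_range.mp hi)
      have hj' := hmaps0 j (List.mem_range.mp hj)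
      rw [K_lt_iff]
      refine Or.inr ⟨rfl, Or.inr ⟨?_, ?_⟩⟩
      · unfold gbit
        simp only [decide_eq_decide]
        omega
      · have := hsa0.2 i j hij (List.mem_range.mp hj)
        unfold own
        rw [if_pos hi', if_pos hj']
        exact this
    · rw [List.pairwise_map]
      refine (List.pairwise_lt_range (n := t1.length)).imp_of_mem ?_
      intro i j hi hj hij
      have hi' := hmaps1 i (List.mem_range.mp hi)
      have hj' := hmaps1 j (List.mem_range.mp hj)
      rw [K_lt_iff]
      refine Or.inr ⟨rfl, Or.inr ⟨?_, ?_⟩⟩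
      · unfold gbit
        simp only [decide_eq_decide]
        omega
      · have := hsa1.2 i j hij (List.mem_range.mp hj)
        unfold own
        rw [if_neg (by omega), if_neg (by omega)]
        have e1 : t0.length + sa1 i - t0.length = sa1 i := by omega
        have e2 : t0.length + sa1 j - t0.length = sa1 j := by omega
        rw [e1, e2]
        exact this
    · intro a ha b hb
      simp only [List.mem_map, List.mem_range] at ha hb
      obtain ⟨i, hi, rfl⟩ := ha
      obtain ⟨j, hj, rfl⟩ := hb
      have hi' := hmaps0 i hi
      rw [K_lt_iff]
      refine Or.inr ⟨rfl, Or.inl ?_⟩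
      have e1 : gbit t0.length (sa0 i) = false := by
        unfold gbit; simp; omega
      have e2 : gbit t0.length (t0.length + sa1 j) = true := by
        unfold gbit; simp
      rw [e1, e2]
      exact Bool.false_lt_true

include hsent hsa0 hsa1 in
theorem map_gbit_S_zero : (S t0 t1 0).map (gbit t0.length)
    = List.replicate t0.length false ++ List.replicate t1.length true := by
  rw [S_zero t0 t1 sa0 sa1 hsent hsa0 hsa1, List.map_append]
  congr 1
  · refine List.eq_replicate_iff.mpr ⟨by simp, ?_⟩
    intro b hb
    simp only [List.mem_map, List.mem_range] at hb
    obtain ⟨q, ⟨i, hi, rfl⟩, rfl⟩ := hb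
    have : sa0 i < t0.length := by simpa using hsa0.1.mapsTo (by simpa using hi)
    unfold gbit
    simp
    omega
  · refine List.eq_replicate_iff.mpr ⟨by simp, ?_⟩
    intro b hb
    simp only [List.mem_map, List.mem_range] at hb
    obtain ⟨q, ⟨i, hi, rfl⟩, rfl⟩ := hb
    unfold gbit
    simp

include hsent hsa0 in
theorem bwt0_eq_gchar {r : ℕ} (hr : r < t0.length) :
    (bwtList t0 sa0).getD r default = gchar t0 t1 (sa0 r) := by
  have h0 := List.length_pos_iff.mpr hsent.1
  have h1 := List.length_pos_iff.mpr hsent.2.1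
  have hsa : sa0 r < t0.length := by simpa using hsa0.1.mapsTo (by simpa using hr)
  have hofn : (bwtList t0 sa0).getD r default = bwtOf t0 sa0 r := by
    rw [bwtList, List.getD_eq_getElem _ _ (by simpa using hr), List.getElem_ofFn]
  rw [hofn]
  unfold bwtOf gchar
  rcases eq_or_ne (sa0 r) 0 with hz | hz
  · rw [if_pos hz, hz]
    have e1 : gpred t0.length t1.length 0 = t0.length - 1 := by
      unfold gpred; rw [if_pos rfl]
    rw [e1, List.getD_eq_getElem _ _ (by omega),
      List.getD_eq_getElem _ _ (by simp; omega),
      List.getElem_append_left (by omega)]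
  · rw [if_neg hz]
    have e1 : gpred t0.length t1.length (sa0 r) = sa0 r - 1 := by
      unfold gpred; rw [if_neg hz, if_neg (by omega)]
    rw [e1, List.getD_eq_getElem _ _ (by omega),
      List.getD_eq_getElem _ _ (by simp; omega),
      List.getElem_append_left (by omega)]

include hsent hsa1 in
theorem bwt1_eq_gchar {r : ℕ} (hr : r < t1.length) :
    (bwtList t1 sa1).getD r default = gchar t0 t1 (t0.length + sa1 r) := by
  have h0 := List.length_pos_iff.mpr hsent.1
  have h1 := List.length_pos_iff.mpr hsent.2.1
  have hsa : sa1 r < t1.length := by simpa using hsa1.1.mapsTo (by simpa using hr)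
  have hofn : (bwtList t1 sa1).getD r default = bwtOf t1 sa1 r := by
    rw [bwtList, List.getD_eq_getElem _ _ (by simpa using hr), List.getElem_ofFn]
  rw [hofn]
  unfold bwtOf gchar
  rcases eq_or_ne (sa1 r) 0 with hz | hz
  · rw [if_pos hz, hz]
    have e1 : gpred t0.length t1.length (t0.length + 0)
        = t0.length + t1.length - 1 := by
      unfold gpred; rw [if_neg (by omega), if_pos (by omega)]
    rw [e1, List.getD_eq_getElem _ _ (by omega),
      List.getD_eq_getElem _ _ (by simp; omega),
      List.getElem_append_right (by omega)]
    congr 1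
    omega
  · rw [if_neg hz]
    have e1 : gpred t0.length t1.length (t0.length + sa1 r)
        = t0.length + sa1 r - 1 := by
      unfold gpred; rw [if_neg (by omega), if_neg (by omega)]
    rw [e1, List.getD_eq_getElem _ _ (by omega),
      List.getD_eq_getElem _ _ (by simp; omega),
      List.getElem_append_right (by omega)]
    congr 1
    omega

include hsent hsa0 hsa1 in
theorem hm_pairs (h : ℕ) :
    (List.range ((S t0 t1 h).map (gbit t0.length)).length).map (fun k =>
      let b := ((S t0 t1 h).map (gbit t0.length)).getD k false
      let c := if b
        then (bwtList t1 sa1).getD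
          ((((S t0 t1 h).map (gbit t0.length)).take k).count true) default
        else (bwtList t0 sa0).getD
          ((((S t0 t1 h).map (gbit t0.length)).take k).count false) default
      (b, c))
    = (S t0 t1 h).map (fun q => (gbit t0.length q, gchar t0 t1 q)) := by
  apply List.ext_getElem
  · simp
  · intro k hk1 hk2
    have hkS : k < (S t0 t1 h).length := by simpa using hk2
    rw [List.getElem_map, List.getElem_map, List.getElem_range]
    set q := (S t0 t1 h)[k] with hqdef
    have hqmem : q ∈ S t0 t1 h := List.getElem_mem _
    have hqlt : q < t0.length + t1.length := (S_mem t0 t1).mp hqmem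
    have hb : ((S t0 t1 h).map (gbit t0.length)).getD k false = gbit t0.length q := by
      rw [List.getD_eq_getElem _ _ (by simpa using hkS), List.getElem_map]
    simp only [hb]
    have htake : ((S t0 t1 h).map (gbit t0.length)).take k
        = ((S t0 t1 h).take k).map (gbit t0.length) := by
      rw [List.map_take]
    cases hgb : gbit t0.length q with
    | true =>
      simp only [if_pos]
      congr 1
      rw [htake, count_true_map_gbit]
      obtain ⟨hlt, hel⟩ := countP_lt_and_getElem (fun q => gbit t0.length q)
        (S t0 t1 h) k hkS (by simpa using hgb)
      rw [filter_S_t1 t0 t1 sa1 hsent hsa1 h] at hlt hel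
      set r := ((S t0 t1 h).take k).countP (fun q => gbit t0.length q) with hrdef
      have hrlt : r < t1.length := by simpa using hlt
      have hq : q = t0.length + sa1 r := by
        rw [hqdef, ← hel, List.getD_eq_getElem _ _ (by simpa using hlt),
          List.getElem_map, List.getElem_range]
      rw [bwt1_eq_gchar t0 t1 sa1 hsent hsa1 hrlt, ← hq]
    | false =>
      simp only [Bool.false_eq_true, if_false]
      congr 1
      rw [htake, count_false_map_gbit]
      obtain ⟨hlt, hel⟩ := countP_lt_and_getElem (fun q => !gbit t0.length q)
        (S t0 t1 h) k hkS (by simp; exact hgb)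
      rw [filter_S_t0 t0 t1 sa0 hsent hsa0 h] at hlt hel
      set r := ((S t0 t1 h).take k).countP (fun q => !gbit t0.length q) with hrdef
      have hrlt : r < t0.length := by simpa using hlt
      have hq : q = sa0 r := by
        rw [hqdef, ← hel, List.getD_eq_getElem _ _ (by simpa using hlt),
          List.getElem_map, List.getElem_range]
      rw [bwt0_eq_gchar t0 t1 sa0 hsent hsa0 hrlt, ← hq]

include hsent hsa0 hsa1 in
theorem hmZ_eq : ∀ g : ℕ,
    hmZ (bwtList t0 sa0) (bwtList t1 sa1) t0.length t1.length g
      = (S t0 t1 g).map (gbit t0.length) := by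
  intro g
  induction g with
  | zero =>
    rw [hmZ]
    exact (map_gbit_S_zero t0 t1 sa0 sa1 hsent hsa0 hsa1).symm
  | succ h ih =>
    rw [hmZ, hmStep]
    simp only [ih]
    rw [hm_pairs t0 t1 sa0 sa1 hsent hsa0 hsa1 h]
    rw [← List.map_mergeSort (r := fun q q' => decide (gchar t0 t1 q ≤ gchar t0 t1 q'))
      (f := fun q => (gbit t0.length q, gchar t0 t1 q)) (fun a _ b _ => rfl)]
    rw [List.map_map]
    rw [S_succ t0 t1 hsent h, List.map_map]
    apply List.map_congr_left
    intro q hq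
    have hqlt : q < t0.length + t1.length :=
      (S_mem t0 t1).mp ((List.mergeSort_perm _ _).subset hq)
    have h0 := List.length_pos_iff.mpr hsent.1
    have h1 := List.length_pos_iff.mpr hsent.2.1
    simp only [Function.comp]
    exact (gbit_gpred t0 t1 h0 h1 hqlt).symm

end ZEq

section Lcp
variable [DecidableEq A]

theorem take_eq_of_le_lcpLen : ∀ (x y : List A) (h : ℕ), h ≤ lcpLen x y →
    x.take h = y.take h
  | _, _, 0, _ => by simp
  | [], y, h + 1, hle => by
    have : lcpLen ([] : List A) y = 0 := by cases y <;> rfl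
    omega
  | a :: as, [], h + 1, hle => by
    have : lcpLen (a :: as) ([] : List A) = 0 := rfl
    omega
  | a :: as, b :: bs, h + 1, hle => by
    by_cases hab : a = b
    · subst hab
      have he : lcpLen (a :: as) (a :: bs) = lcpLen as bs + 1 := by
        simp [lcpLen]
      rw [List.take_succ_cons, List.take_succ_cons,
        take_eq_of_le_lcpLen as bs h (by omega)]
    · have he : lcpLen (a :: as) (b :: bs) = 0 := by
        simp [lcpLen, hab]
      omega

theorem eq_of_take_eq_of_lcpLen_lt : ∀ (x y : List A) (h : ℕ),
    x.take h = y.take h → lcpLen x y < h → x = y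
  | _, _, 0, _, hlt => by omega
  | [], [], _, _, _ => rfl
  | [], b :: bs, h + 1, hteq, _ => by simp [List.take_succ_cons] at hteq
  | a :: as, [], h + 1, hteq, _ => by simp [List.take_succ_cons] at hteq
  | a :: as, b :: bs, h + 1, hteq, hlt => by
    simp only [List.take_succ_cons, List.cons.injEq] at hteq
    obtain ⟨rfl, hteq⟩ := hteq
    have he : lcpLen (a :: as) (a :: bs) = lcpLen as bs + 1 := by simp [lcpLen]
    have := eq_of_take_eq_of_lcpLen_lt as bs h hteq (by omega)
    rw [this]

end Lcp

section Final
variable [LinearOrder A] [Inhabited A] (t0 t1 : List A) (sa0 sa1 sa01 : ℕ → ℕ)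
variable (hsent : Sentinels t0 t1) (hsa0 : isSuffixArray t0 sa0)
  (hsa1 : isSuffixArray t1 sa1) (hsa01 : isSuffixArray (t0 ++ t1) sa01)

theorem gkey_take {g h q : ℕ} (hg : h ≤ g) :
    (gkey t0 t1 g q).take h = gkey t0 t1 h q := by
  unfold gkey
  rw [List.take_take, min_eq_left hg]

include hsa01 in
theorem sa01_bij : Set.BijOn sa01 (Set.Iio (t0.length + t1.length))
    (Set.Iio (t0.length + t1.length)) := by
  have := hsa01.1
  simpa using this

include hsa01 in
theorem gkey_mono {h : ℕ} {i j : ℕ} (hij : i ≤ j) (hj : j < t0.length + t1.length) :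
    gkey t0 t1 h (sa01 i) ≤ gkey t0 t1 h (sa01 j) := by
  rcases lt_or_eq_of_le hij with hlt | rfl
  · exact myLex.take_le_take (le_of_lt (hsa01.2 i j hlt (by simpa using hj))) h
  · exact le_rfl

include hsent hsa01 in
theorem map_gkey_eq (h : ℕ) :
    (S t0 t1 h).map (gkey t0 t1 h)
      = ((List.range (t0.length + t1.length)).map sa01).map (gkey t0 t1 h) := by
  haveI : IsAntisymm (List A) (· ≤ ·) := ⟨fun a b => le_antisymm⟩
  refine (fun hp hX hY => List.Perm.eq_of_pairwise (le := (· ≤ ·))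
    (fun a b _ _ h h' => le_antisymm h h') hX hY hp) ?_ ?_ ?_
  · exact ((S_perm t0 t1 h).trans (map_bij_perm (sa01_bij t0 t1 sa01 hsa01)).symm).map _
  · exact List.pairwise_map.mpr ((S_pairwise t0 t1 h).imp (fun hK => by
      rw [K_lt_iff] at hK
      rcases hK with hK | ⟨hK, -⟩
      · exact le_of_lt hK
      · exact le_of_eq hK))
  · rw [List.map_map]
    refine List.pairwise_map.mpr ((List.pairwise_lt_range).imp_of_mem ?_)
    intro i j hi hj hij
    exact gkey_mono t0 t1 sa01 hsa01 (le_of_lt hij) (List.mem_range.mp hj)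

include hsent hsa01 in
theorem gkey_S_eq {h p : ℕ} (hp : p < t0.length + t1.length) :
    gkey t0 t1 h ((S t0 t1 h).getD p 0) = gkey t0 t1 h (sa01 p) := by
  have hlen : p < (S t0 t1 h).length := by rw [S_length]; exact hp
  have h1 : ((S t0 t1 h).map (gkey t0 t1 h))[p]'(by simpa using hlen)
      = (((List.range (t0.length + t1.length)).map sa01).map (gkey t0 t1 h))[p]'
        (by simpa using hp) := by
    congr 1
    exact map_gkey_eq t0 t1 sa01 hsent hsa01 h
  rw [List.getElem_map, List.getElem_map, List.getElem_map, List.getElem_range] at h1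
  rw [List.getD_eq_getElem _ _ hlen]
  exact h1

end Final

section Final2
variable [LinearOrder A] [Inhabited A] (t0 t1 : List A) (sa0 sa1 sa01 : ℕ → ℕ)
variable (hsent : Sentinels t0 t1) (hsa0 : isSuffixArray t0 sa0)
  (hsa1 : isSuffixArray t1 sa1) (hsa01 : isSuffixArray (t0 ++ t1) sa01)
variable {h ℓ m : ℕ} (hblock : isBlock (t0 ++ t1) sa01 h ℓ m)

include hsa01 hblock in
theorem key_const : ∀ p, ℓ ≤ p → p ≤ m →
    gkey t0 t1 h (sa01 p) = gkey t0 t1 h (sa01 ℓ) := by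
  have hmn : m < t0.length + t1.length := by simpa using hblock.2.1
  have hint := hblock.2.2.2.2
  intro p hp1 hp2
  induction p, hp1 using Nat.le_induction with
  | base => rfl
  | succ p hp ih =>
    have hple : p ≤ m := by omega
    rw [← ih hple]
    have hi := hint (p + 1) (by omega) hp2
    rw [lcpArr, if_neg (by push_neg; constructor <;> [omega; (simp; omega)])] at hi
    have hi' : h ≤ lcpLen ((t0 ++ t1).drop (sa01 (p + 1 - 1)))
        ((t0 ++ t1).drop (sa01 (p + 1))) := by exact_mod_cast hi
    simp only [Nat.add_sub_cancel] at hi'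
    have htk := take_eq_of_le_lcpLen _ _ h hi'
    unfold gkey
    exact htk.symm

include hsa01 hblock in
theorem key_only_block : ∀ p, p < t0.length + t1.length →
    gkey t0 t1 h (sa01 p) = gkey t0 t1 h (sa01 ℓ) → ℓ ≤ p ∧ p ≤ m := by
  have hlm := hblock.1
  have hmn : m < t0.length + t1.length := by simpa using hblock.2.1
  have hl := hblock.2.2.1
  have hm1 := hblock.2.2.2.1
  intro p hp hkey
  constructor
  · by_contra hcon
    push_neg at hcon
    have hl0 : ℓ ≠ 0 := by omega
    have hlltn : ℓ < t0.length + t1.length := by omega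
    rw [lcpArr, if_neg (by push_neg; constructor <;> [omega; (simp; omega)])] at hl
    have hllt : lcpLen ((t0 ++ t1).drop (sa01 (ℓ - 1)))
        ((t0 ++ t1).drop (sa01 ℓ)) < h := by exact_mod_cast hl
    have h1 : gkey t0 t1 h (sa01 p) ≤ gkey t0 t1 h (sa01 (ℓ - 1)) :=
      gkey_mono t0 t1 sa01 hsa01 (by omega) (by omega)
    have h2 : gkey t0 t1 h (sa01 (ℓ - 1)) ≤ gkey t0 t1 h (sa01 ℓ) :=
      gkey_mono t0 t1 sa01 hsa01 (by omega) (by omega)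
    have heq : gkey t0 t1 h (sa01 (ℓ - 1)) = gkey t0 t1 h (sa01 ℓ) := by
      rw [hkey] at h1
      exact le_antisymm h2 h1
    unfold gkey at heq
    have hdropeq := eq_of_take_eq_of_lcpLen_lt _ _ h heq hllt
    have hstrict := hsa01.2 (ℓ - 1) ℓ (by omega) (by simpa using hlltn)
    rw [hdropeq] at hstrict
    exact lt_irrefl _ hstrict
  · by_contra hcon
    push_neg at hcon
    have hm1n : m + 1 < t0.length + t1.length := by omega
    rw [lcpArr, if_neg (by push_neg; constructor <;> [omega; (simp; omega)])] at hm1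
    have hmlt : lcpLen ((t0 ++ t1).drop (sa01 (m + 1 - 1)))
        ((t0 ++ t1).drop (sa01 (m + 1))) < h := by exact_mod_cast hm1
    simp only [Nat.add_sub_cancel] at hmlt
    have hkm : gkey t0 t1 h (sa01 m) = gkey t0 t1 h (sa01 ℓ) :=
      key_const t0 t1 sa01 hsa01 hblock m hlm le_rfl
    have ha : gkey t0 t1 h (sa01 m) ≤ gkey t0 t1 h (sa01 (m + 1)) :=
      gkey_mono t0 t1 sa01 hsa01 (by omega) (by omega)
    have hb2 : gkey t0 t1 h (sa01 (m + 1)) ≤ gkey t0 t1 h (sa01 p) :=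
      gkey_mono t0 t1 sa01 hsa01 (by omega) hp
    have heq : gkey t0 t1 h (sa01 m) = gkey t0 t1 h (sa01 (m + 1)) := by
      rw [hkey, ← hkm] at hb2
      exact le_antisymm ha hb2
    unfold gkey at heq
    have hdropeq := eq_of_take_eq_of_lcpLen_lt _ _ h heq hmlt
    have hstrict := hsa01.2 m (m + 1) (by omega) (by simpa using hm1n)
    rw [hdropeq] at hstrict
    exact lt_irrefl _ hstrict

include hsent hsa01 hblock in
theorem bit_of_key (b : Bool)
    (hmono : ∀ p, ℓ ≤ p → p ≤ m →
      ((S t0 t1 h).map (gbit t0.length)).getD p false = b) :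
    ∀ q, q < t0.length + t1.length → gkey t0 t1 h q = gkey t0 t1 h (sa01 ℓ) →
      gbit t0.length q = b := by
  intro q hq hkey
  have hqS : q ∈ S t0 t1 h := (S_mem t0 t1).mpr hq
  obtain ⟨p, hp, hpe⟩ := List.getElem_of_mem hqS
  have hpn : p < t0.length + t1.length := by rw [← S_length t0 t1 h]; exact hp
  have hk2 : gkey t0 t1 h (sa01 p) = gkey t0 t1 h (sa01 ℓ) := by
    rw [← gkey_S_eq t0 t1 sa01 hsent hsa01 hpn, List.getD_eq_getElem _ _ hp, hpe]
    exact hkey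
  obtain ⟨hp1, hp2⟩ := key_only_block t0 t1 sa01 hsa01 hblock p hpn hk2
  have hres := hmono p hp1 hp2
  rw [List.getD_eq_getElem _ _ (by simpa using hp), List.getElem_map, hpe] at hres
  exact hres

include hsent hsa0 hsa1 hsa01 hblock in
theorem monochrome_stable' (b : Bool)
    (hmono : ∀ p, ℓ ≤ p → p ≤ m →
      (hmZ (bwtList t0 sa0) (bwtList t1 sa1) t0.length t1.length h).getD p false
        = b) :
    ∀ g, h < g → ∀ p, ℓ ≤ p → p ≤ m →
      (hmZ (bwtList t0 sa0) (bwtList t1 sa1) t0.length t1.length g).getD p false =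
      (hmZ (bwtList t0 sa0) (bwtList t1 sa1) t0.length t1.length h).getD p false := by
  intro g hg p hp1 hp2
  have hmn : m < t0.length + t1.length := by simpa using hblock.2.1
  have hpn : p < t0.length + t1.length := by omega
  rw [hmono p hp1 hp2]
  rw [hmZ_eq t0 t1 sa0 sa1 hsent hsa0 hsa1 g]
  have hplen : p < (S t0 t1 g).length := by rw [S_length]; exact hpn
  rw [List.getD_eq_getElem _ _ (by simpa using hplen), List.getElem_map]
  have hmono' : ∀ p, ℓ ≤ p → p ≤ m →
      ((S t0 t1 h).map (gbit t0.length)).getD p false = b := by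
    intro p' hp1' hp2'
    rw [← hmZ_eq t0 t1 sa0 sa1 hsent hsa0 hsa1 h]
    exact hmono p' hp1' hp2'
  refine bit_of_key t0 t1 sa01 hsent hsa01 hblock b hmono' _ ?_ ?_
  · exact (S_mem t0 t1).mp (List.getElem_mem hplen)
  · have e1 : gkey t0 t1 g ((S t0 t1 g).getD p 0) = gkey t0 t1 g (sa01 p) :=
      gkey_S_eq t0 t1 sa01 hsent hsa01 hpn
    have e2 := congrArg (List.take h) e1
    rw [gkey_take t0 t1 (le_of_lt hg), gkey_take t0 t1 (le_of_lt hg)] at e2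
    rw [List.getD_eq_getElem _ _ hplen] at e2
    rw [e2]
    exact key_const t0 t1 sa01 hsa01 hblock p hp1 hp2

end Final2

end HMAux

/-- if `Z_h[ℓ,m]` is a monochrome block at the end of iteration
`h`, then for every `g > h` the content of positions `ℓ..m` is unchanged:
`Z_g[ℓ,m] = Z_h[ℓ,m]`. -/
theorem monochrome_stable [LinearOrder A] [Inhabited A]
    (t0 t1 : List A) (sa0 sa1 sa01 : ℕ → ℕ)
    (hsent : Sentinels t0 t1)
    (hsa0 : isSuffixArray t0 sa0) (hsa1 : isSuffixArray t1 sa1)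
    (hsa01 : isSuffixArray (t0 ++ t1) sa01)
    (h ℓ m : ℕ) (b : Bool)
    (hblock : isBlock (t0 ++ t1) sa01 h ℓ m)
    (hmono : ∀ p, ℓ ≤ p → p ≤ m →
      (hmZ (bwtList t0 sa0) (bwtList t1 sa1) t0.length t1.length h).getD p false
        = b) :
    ∀ g, h < g → ∀ p, ℓ ≤ p → p ≤ m →
      (hmZ (bwtList t0 sa0) (bwtList t1 sa1) t0.length t1.length g).getD p false =
      (hmZ (bwtList t0 sa0) (bwtList t1 sa1) t0.length t1.length h).getD p false := by
  intro g hg p hp1 hp2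
  exact monochrome_stable' t0 t1 sa0 sa1 sa01 hsent hsa0 hsa1 hsa01 hblock b hmono
    g hg p hp1 hp2
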